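/- Let n ≥ 2 and 0 < r ≤ R ≤ 2r, and let θ ∈ (0,π] be defined by sin(θ/2) = sinh(r)/sinh(R). Work in the hyperboloid model of hyperbolic n-space: H^n = {x ∈ ℝ^{n+1} : x₁²+⋯+x_n² − x_{n+1}² = −1, x_{n+1} > 0} with distance d(x,y) = arcosh(x_{n+1}y_{n+1} − x₁y₁ − ⋯ − x_n y_n). Suppose c, x₁, …, x_N ∈ H^n satisfy x_i ≠ c and d(x_i, c) ≤ R for all i, and d(x_i, x_j) ≥ 2r for all i ≠ j. Then N ≤ A(n,θ). -/

import Mathlib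

open Real
open scoped BigOperators

/-- The inverse hyperbolic cosine. -/
noncomputable def arcosh (t : ℝ) : ℝ := Real.log (t + Real.sqrt (t ^ 2 - 1))

/-- Membership in the hyperboloid model of hyperbolic `n`-space inside `ℝ^{n+1}`:
`x₁² + ⋯ + xₙ² − x_{n+1}² = −1` with `x_{n+1} > 0`. -/
def InHyperboloid (n : ℕ) (x : EuclideanSpace ℝ (Fin (n + 1))) : Prop :=
  (∑ i : Fin n, x i.castSucc ^ 2) - x (Fin.last n) ^ 2 = -1 ∧ 0 < x (Fin.last n)

/-- The hyperbolic distance in the hyperboloid model: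
`d(x,y) = arcosh(x_{n+1} y_{n+1} − x₁y₁ − ⋯ − xₙyₙ)`. -/
noncomputable def hypDist (n : ℕ) (x y : EuclideanSpace ℝ (Fin (n + 1))) : ℝ :=
  _root_.arcosh (x (Fin.last n) * y (Fin.last n) - ∑ i : Fin n, x i.castSucc * y i.castSucc)

/-- `A(n,θ)`: the maximum size of a spherical code in the unit sphere of `ℝ^n`
with minimal angle `θ`. -/
noncomputable def sphericalCodeMax (n : ℕ) (θ : ℝ) : ℕ :=
  sSup {N : ℕ | ∃ C : Finset (EuclideanSpace ℝ (Fin n)), C.card = N ∧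
    (∀ x ∈ C, ‖x‖ = 1) ∧
    (∀ x ∈ C, ∀ y ∈ C, x ≠ y → (inner ℝ x y : ℝ) ≤ Real.cos θ)}

/-! ### Auxiliary arithmetic lemmas -/

lemma step_ineq (A a b C : ℝ) (ha1 : 1 < a) (haA : a ≤ A) (hb1 : 1 < b) (hbA : b ≤ A)
    (hAC : A ≤ C) (hC : C < a * b) :
    (a * b - C) ^ 2 * (A ^ 2 - 1) ≤ (A * b - C) ^ 2 * (a ^ 2 - 1) := by
  have hA1 : 1 < A := lt_of_lt_of_le ha1 haA
  have habA : 0 < a * b - A := by linarith [lt_of_le_of_lt hAC hC]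
  have hqA : 0 ≤ 2 * b * A * (A * a + 1) - (A + a) * (A ^ 2 + b ^ 2) := by
    nlinarith [mul_nonneg (sub_nonneg.2 hbA) (sub_nonneg.2 haA),
      mul_nonneg habA.le (sub_nonneg.2 hbA),
      mul_nonneg habA.le (by linarith : (0:ℝ) ≤ A - 1),
      mul_pos (sub_pos.2 ha1) (sub_pos.2 hA1),
      mul_nonneg (mul_nonneg habA.le (sub_nonneg.2 hbA)) (by linarith : (0:ℝ) ≤ a - 1),
      mul_nonneg (mul_nonneg habA.le (by linarith : (0:ℝ) ≤ a - 1)) (by linarith : (0:ℝ) ≤ A - 1)]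
  have hqab : 0 ≤ b ^ 2 * (a ^ 2 - 1) * (A - a) := by
    have h1 : (0:ℝ) ≤ a ^ 2 - 1 := by nlinarith
    have h2 : (0:ℝ) ≤ A - a := by linarith
    positivity
  have hbr : 0 ≤ 2 * b * C * (A * a + 1) - (A + a) * (C ^ 2 + b ^ 2) := by
    nlinarith [hqA, hqab, mul_nonneg (sub_nonneg.2 hC.le) (sub_nonneg.2 hAC),
      mul_nonneg (mul_nonneg (sub_nonneg.2 hC.le) (sub_nonneg.2 hAC)) habA.le,
      mul_nonneg (sub_nonneg.2 hC.le) habA.le,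
      mul_nonneg (sub_nonneg.2 hAC) habA.le, habA]
  nlinarith [mul_nonneg (sub_nonneg.2 haA) hbr]

lemma main_ineq (A C a b t : ℝ) (ha1 : 1 < a) (haA : a ≤ A) (hb1 : 1 < b) (hbA : b ≤ A)
    (hAC : A ≤ C) (htC : C ≤ t) :
    a * b - t ≤ (A ^ 2 - C) / (A ^ 2 - 1) * (Real.sqrt (a ^ 2 - 1) * Real.sqrt (b ^ 2 - 1)) := by
  have hA1 : 1 < A := lt_of_lt_of_le ha1 haA
  have hA2 : (0:ℝ) < A ^ 2 - 1 := by nlinarith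
  have ha2 : (0:ℝ) < a ^ 2 - 1 := by nlinarith
  have hb2 : (0:ℝ) < b ^ 2 - 1 := by nlinarith
  set p := Real.sqrt (a ^ 2 - 1) * Real.sqrt (b ^ 2 - 1) with hp
  have hp0 : 0 < p := mul_pos (Real.sqrt_pos.2 ha2) (Real.sqrt_pos.2 hb2)
  have hpA : p ≤ A ^ 2 - 1 := by
    calc p ≤ Real.sqrt (A ^ 2 - 1) * Real.sqrt (A ^ 2 - 1) := by
            apply mul_le_mul (Real.sqrt_le_sqrt (by nlinarith)) (Real.sqrt_le_sqrt (by nlinarith))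
              (Real.sqrt_nonneg _) (Real.sqrt_nonneg _)
      _ = A ^ 2 - 1 := Real.mul_self_sqrt hA2.le
  have hsuff : a * b - C ≤ (A ^ 2 - C) / (A ^ 2 - 1) * p → a * b - t ≤ (A ^ 2 - C) / (A ^ 2 - 1) * p := by
    intro h; linarith
  apply hsuff
  rcases le_or_gt (A ^ 2) C with hCA2 | hCA2
  · -- K ≤ 0 case
    have hK : (A ^ 2 - C) / (A ^ 2 - 1) ≤ 0 := div_nonpos_iff.2 (Or.inr ⟨by linarith, hA2.le⟩)
    have h1 : (A ^ 2 - C) / (A ^ 2 - 1) * (A ^ 2 - 1) ≤ (A ^ 2 - C) / (A ^ 2 - 1) * p :=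
      mul_le_mul_of_nonpos_left hpA hK
    have h2 : (A ^ 2 - C) / (A ^ 2 - 1) * (A ^ 2 - 1) = A ^ 2 - C := by
      field_simp
    nlinarith [mul_le_mul haA hbA (by linarith) (by linarith : (0:ℝ) ≤ A)]
  · rcases le_or_gt (a * b) C with hab | hab
    · have : (0:ℝ) ≤ (A ^ 2 - C) / (A ^ 2 - 1) * p :=
        mul_nonneg (div_nonneg (by linarith) hA2.le) hp0.le
      linarith
    · have S1 := step_ineq A a b C ha1 haA hb1 hbA hAC hab
      have S2 := step_ineq A b A C hb1 hbA hA1 le_rfl hAC (by nlinarith)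
      have hchain : ((a * b - C) * (A ^ 2 - 1)) ^ 2 ≤ ((A ^ 2 - C) * p) ^ 2 := by
        have e1 : ((A ^ 2 - C) * p) ^ 2 = (A ^ 2 - C) ^ 2 * ((a ^ 2 - 1) * (b ^ 2 - 1)) := by
          rw [hp, mul_pow, mul_pow, Real.sq_sqrt ha2.le, Real.sq_sqrt hb2.le]
          try ring
        rw [e1]
        nlinarith [S1, S2, sq_nonneg (A * b - C), ha2, hA2]
      have hfin : (a * b - C) * (A ^ 2 - 1) ≤ (A ^ 2 - C) * p := by
        apply le_of_pow_le_pow_left₀ two_ne_zero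
          (mul_nonneg (by nlinarith) hp0.le) hchain
      rw [div_mul_eq_mul_div, le_div_iff₀ hA2]
      linarith

/-! ### The Lorentz bilinear form -/

def Bform (n : ℕ) (x y : EuclideanSpace ℝ (Fin (n + 1))) : ℝ :=
  (∑ i : Fin n, x i.castSucc * y i.castSucc) - x (Fin.last n) * y (Fin.last n)

lemma Bform_comm (n : ℕ) (x y : EuclideanSpace ℝ (Fin (n + 1))) :
    Bform n x y = Bform n y x := by
  simp [Bform, mul_comm]

lemma Bform_add_left (n : ℕ) (x x' y : EuclideanSpace ℝ (Fin (n + 1))) :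
    Bform n (x + x') y = Bform n x y + Bform n x' y := by
  simp [Bform, add_mul, Finset.sum_add_distrib]
  ring

lemma Bform_smul_left (n : ℕ) (r : ℝ) (x y : EuclideanSpace ℝ (Fin (n + 1))) :
    Bform n (r • x) y = r * Bform n x y := by
  simp only [Bform, PiLp.smul_apply, smul_eq_mul]
  rw [mul_sub, Finset.mul_sum]
  congr 1
  · exact Finset.sum_congr rfl fun i _ => by ring
  · ring

lemma Bform_self (n : ℕ) (x : EuclideanSpace ℝ (Fin (n + 1))) (hx : InHyperboloid n x) :
    Bform n x x = -1 := by
  have := hx.1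
  simp only [Bform, ← sq]
  linarith

lemma hypDist_eq (n : ℕ) (x y : EuclideanSpace ℝ (Fin (n + 1))) :
    hypDist n x y = _root_.arcosh (-(Bform n x y)) := by
  unfold hypDist Bform
  congr 1
  ring

lemma Bform_posdef (n : ℕ) (c : EuclideanSpace ℝ (Fin (n + 1))) (hc : InHyperboloid n c)
    (v : EuclideanSpace ℝ (Fin (n + 1))) (hv : Bform n v c = 0) :
    0 ≤ Bform n v v ∧ (Bform n v v = 0 → v = 0) := by
  obtain ⟨hc1, hc2⟩ := hc
  have CS := Finset.sum_mul_sq_le_sq_mul_sq Finset.univ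
    (fun i : Fin n => v i.castSucc) (fun i : Fin n => c i.castSucc)
  have hP : 0 ≤ ∑ i : Fin n, v i.castSucc ^ 2 :=
    Finset.sum_nonneg fun i _ => sq_nonneg _
  have hv' : (∑ i : Fin n, v i.castSucc * c i.castSucc) = v (Fin.last n) * c (Fin.last n) := by
    have := hv; unfold Bform at this; linarith
  have hBvv : Bform n v v = (∑ i : Fin n, v i.castSucc ^ 2) - v (Fin.last n) ^ 2 := by
    unfold Bform
    rw [← pow_two]
    congr 1
    exact Finset.sum_congr rfl fun i _ => (pow_two _).symm
  have hQ : (∑ i : Fin n, c i.castSucc ^ 2) = c (Fin.last n) ^ 2 - 1 := by linarith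
  rw [hv', hQ] at CS
  have key : 0 ≤ ((∑ i : Fin n, v i.castSucc ^ 2) - v (Fin.last n) ^ 2) * c (Fin.last n) ^ 2
      ∧ (∑ i : Fin n, v i.castSucc ^ 2) ≤
        ((∑ i : Fin n, v i.castSucc ^ 2) - v (Fin.last n) ^ 2) * c (Fin.last n) ^ 2 := by
    constructor <;> nlinarith [CS, hP, sq_nonneg (v (Fin.last n)), sq_nonneg (c (Fin.last n))]
  constructor
  · rw [hBvv]
    nlinarith [key.1, key.2, sq_nonneg (c (Fin.last n)), mul_pos hc2 hc2]
  · intro h0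
    rw [hBvv] at h0
    have hPz : (∑ i : Fin n, v i.castSucc ^ 2) = 0 := by nlinarith [key.2]
    have hsz : v (Fin.last n) = 0 := by
      have : v (Fin.last n) ^ 2 = 0 := by linarith
      exact pow_eq_zero_iff two_ne_zero |>.1 this
    ext i
    rcases Fin.eq_castSucc_or_eq_last i with ⟨j, rfl⟩ | rfl
    · have := (Finset.sum_eq_zero_iff_of_nonneg (fun i _ => sq_nonneg (v i.castSucc))).1 hPz j (Finset.mem_univ j)
      simpa using pow_eq_zero_iff two_ne_zero |>.1 this
    · simpa using hsz

lemma cosh_arcosh {t : ℝ} (ht : 1 ≤ t) : Real.cosh (_root_.arcosh t) = t := by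
  have h1 : 0 ≤ t ^ 2 - 1 := by nlinarith
  have hs : Real.sqrt (t ^ 2 - 1) ^ 2 = t ^ 2 - 1 := Real.sq_sqrt h1
  have hu : 0 < t + Real.sqrt (t ^ 2 - 1) := by
    nlinarith [Real.sqrt_nonneg (t ^ 2 - 1)]
  have hinv : (t + Real.sqrt (t ^ 2 - 1))⁻¹ = t - Real.sqrt (t ^ 2 - 1) :=
    inv_eq_of_mul_eq_one_right (by nlinarith [hs])
  rw [_root_.arcosh, Real.cosh_eq, Real.exp_log hu, ← Real.log_inv, Real.exp_log (by positivity), hinv]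
  ring

lemma arcosh_nonneg {t : ℝ} (ht : 1 ≤ t) : 0 ≤ _root_.arcosh t :=
  Real.log_nonneg (by nlinarith [Real.sqrt_nonneg (t ^ 2 - 1)])

lemma Bform_add_right (n : ℕ) (x y y' : EuclideanSpace ℝ (Fin (n + 1))) :
    Bform n x (y + y') = Bform n x y + Bform n x y' := by
  rw [Bform_comm, Bform_add_left, Bform_comm n y x, Bform_comm n y' x]

lemma Bform_smul_right (n : ℕ) (r : ℝ) (x y : EuclideanSpace ℝ (Fin (n + 1))) :
    Bform n x (r • y) = r * Bform n x y := by
  rw [Bform_comm, Bform_smul_left, Bform_comm n y x]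

lemma negB_ge_one (n : ℕ) (x y : EuclideanSpace ℝ (Fin (n + 1)))
    (hx : InHyperboloid n x) (hy : InHyperboloid n y) :
    1 ≤ -Bform n x y ∧ (x ≠ y → 1 < -Bform n x y) := by
  have hpos : 0 < -Bform n x y := by
    obtain ⟨hx1, hx2⟩ := hx
    obtain ⟨hy1, hy2⟩ := hy
    have CS := Finset.sum_mul_sq_le_sq_mul_sq Finset.univ
      (fun i : Fin n => x i.castSucc) (fun i : Fin n => y i.castSucc)
    have hPX : (∑ i : Fin n, x i.castSucc ^ 2) = x (Fin.last n) ^ 2 - 1 := by linarith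
    have hPY : (∑ i : Fin n, y i.castSucc ^ 2) = y (Fin.last n) ^ 2 - 1 := by linarith
    have hPXnn : 0 ≤ ∑ i : Fin n, x i.castSucc ^ 2 :=
      Finset.sum_nonneg fun i _ => sq_nonneg _
    have hPYnn : 0 ≤ ∑ i : Fin n, y i.castSucc ^ 2 :=
      Finset.sum_nonneg fun i _ => sq_nonneg _
    rw [hPX, hPY] at CS
    unfold Bform
    nlinarith [CS, mul_pos hx2 hy2, hPXnn, hPYnn, sq_nonneg (x (Fin.last n) * y (Fin.last n))]
  set s := Bform n y x with hs
  have hvx : Bform n (y + s • x) x = 0 := by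
    rw [Bform_add_left, Bform_smul_left, Bform_self n x hx, hs]
    ring
  have hvv : Bform n (y + s • x) (y + s • x) = (Bform n x y) ^ 2 - 1 := by
    rw [Bform_add_left, Bform_smul_left, Bform_add_right, Bform_add_right, Bform_smul_right,
      Bform_smul_right, Bform_self n x hx, Bform_self n y hy, hs, Bform_comm n y x]
    ring
  obtain ⟨hpd1, hpd2⟩ := Bform_posdef n x hx (y + s • x) hvx
  have h1 : 1 ≤ -Bform n x y := by nlinarith [hpd1, hvv]
  refine ⟨h1, fun hne => ?_⟩
  rcases lt_or_eq_of_le h1 with h | h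
  · exact h
  · exfalso
    have hBz : Bform n (y + s • x) (y + s • x) = 0 := by rw [hvv]; nlinarith
    have hv0 := hpd2 hBz
    apply hne
    have hs1 : s = -1 := by rw [hs, Bform_comm n y x]; linarith
    have : y + s • x = 0 := hv0
    rw [hs1] at this
    have : y = x := by
      have h2 : y + (-1 : ℝ) • x = y - x := by
        rw [neg_smul, one_smul]; abel
      rw [h2] at this
      exact sub_eq_zero.1 this
    exact this.symm ▸ rfl

/-! ### Spherical code bounds -/

lemma code_bddAbove (n : ℕ) (θ : ℝ) (hcos : Real.cos θ < 1) :
    BddAbove {N : ℕ | ∃ C : Finset (EuclideanSpace ℝ (Fin n)), C.card = N ∧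
      (∀ x ∈ C, ‖x‖ = 1) ∧
      (∀ x ∈ C, ∀ y ∈ C, x ≠ y → (inner ℝ x y : ℝ) ≤ Real.cos θ)} := by
  classical
  set δ : ℝ := Real.sqrt (2 - 2 * Real.cos θ) with hδ
  have hδ0 : 0 < δ := Real.sqrt_pos.2 (by linarith)
  obtain ⟨t, htfin, hcover⟩ := Metric.totallyBounded_iff.1
    ((isCompact_sphere (0 : EuclideanSpace ℝ (Fin n)) 1).totallyBounded) (δ / 2)
    (by positivity)
  refine ⟨htfin.toFinset.card, fun N hN => ?_⟩
  obtain ⟨C, hcard, hnorm, hang⟩ := hN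
  have hdist : ∀ p ∈ C, ∀ q ∈ C, p ≠ q → δ ≤ dist p q := by
    intro p hp q hq hpq
    have h1 : ‖p - q‖ ^ 2 = ‖p‖ ^ 2 - 2 * (inner ℝ p q : ℝ) + ‖q‖ ^ 2 := by
      rw [@norm_sub_sq_real (EuclideanSpace ℝ (Fin n))]
    rw [hnorm p hp, hnorm q hq] at h1
    have h2 : 2 - 2 * Real.cos θ ≤ ‖p - q‖ ^ 2 := by
      have := hang p hp q hq hpq
      nlinarith
    have : δ ≤ Real.sqrt (‖p - q‖ ^ 2) := Real.sqrt_le_sqrt h2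
    rwa [Real.sqrt_sq (norm_nonneg _), ← dist_eq_norm] at this
  have hchoose : ∀ p ∈ C, ∃ y ∈ t, p ∈ Metric.ball y (δ / 2) := by
    intro p hp
    have hps : p ∈ Metric.sphere (0 : EuclideanSpace ℝ (Fin n)) 1 := by
      simp [Metric.mem_sphere, dist_zero_right, hnorm p hp]
    have := hcover hps
    simpa using this
  set g : EuclideanSpace ℝ (Fin n) → EuclideanSpace ℝ (Fin n) := fun p =>
    if h : ∃ y ∈ t, p ∈ Metric.ball y (δ / 2) then h.choose else p with hg
  have hgmem : ∀ p ∈ C, g p ∈ htfin.toFinset := by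
    intro p hp
    rw [hg]
    simp only []
    rw [dif_pos (hchoose p hp)]
    exact htfin.mem_toFinset.2 (hchoose p hp).choose_spec.1
  have hgball : ∀ p ∈ C, p ∈ Metric.ball (g p) (δ / 2) := by
    intro p hp
    rw [hg]
    simp only []
    rw [dif_pos (hchoose p hp)]
    exact (hchoose p hp).choose_spec.2
  rw [← hcard]
  apply Finset.card_le_card_of_injOn g (fun p hp => hgmem p hp)
  intro p hp q hq hpq
  by_contra hne
  have h1 := hgball p hp
  have h2 := hgball q hq
  have h3 := hdist p hp q hq hne
  rw [Metric.mem_ball] at h1 h2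
  have : dist p q ≤ dist p (g p) + dist (g q) q := by
    rw [hpq]
    exact dist_triangle p (g q) q
  rw [dist_comm (g q) q] at this
  linarith

lemma code_bound_core {F : Type} [AddCommGroup F] [Module ℝ F] [Module.Finite ℝ F]
    (cO : InnerProductSpace.Core ℝ F) (n : ℕ) (hrank : Module.finrank ℝ F = n)
    (θ : ℝ) (hcos : Real.cos θ < 1) (N : ℕ) (u : Fin N → F)
    (hnorm : ∀ i, cO.inner (u i) (u i) = 1)
    (hang : ∀ i j, i ≠ j → cO.inner (u i) (u j) ≤ Real.cos θ) :
    N ≤ sphericalCodeMax n θ := by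
  classical
  letI : NormedAddCommGroup F := cO.toNormedAddCommGroup
  letI : InnerProductSpace ℝ F := InnerProductSpace.ofCore cO.toCore
  have hinner : ∀ v w : F, (inner ℝ v w : ℝ) = cO.inner v w := fun _ _ => rfl
  subst hrank
  set L := (stdOrthonormalBasis ℝ F).repr with hL
  set f : Fin N → EuclideanSpace ℝ (Fin (Module.finrank ℝ F)) := fun i => L (u i) with hf
  have hfnorm : ∀ i, ‖f i‖ = 1 := by
    intro i
    rw [hf]
    simp only [LinearIsometryEquiv.norm_map]
    have h1 : ‖u i‖ ^ 2 = 1 := by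
      rw [← real_inner_self_eq_norm_sq, hinner, hnorm]
    nlinarith [norm_nonneg (u i)]
  have hfinner : ∀ i j, (inner ℝ (f i) (f j) : ℝ) = cO.inner (u i) (u j) := by
    intro i j
    rw [hf]
    simp only []
    rw [L.inner_map_map, hinner]
  have hfinj : Function.Injective f := by
    intro i j hij
    by_contra hne
    have huij : u i = u j := L.injective hij
    have h1 := hang i j hne
    rw [← huij, hnorm i] at h1
    linarith
  set C : Finset (EuclideanSpace ℝ (Fin (Module.finrank ℝ F))) :=
    Finset.image f Finset.univ with hC
  have hcard : C.card = N := by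
    rw [hC, Finset.card_image_of_injective _ hfinj, Finset.card_univ, Fintype.card_fin]
  have hmem : N ∈ {M : ℕ | ∃ C : Finset (EuclideanSpace ℝ (Fin (Module.finrank ℝ F))),
      C.card = M ∧ (∀ x ∈ C, ‖x‖ = 1) ∧
      (∀ x ∈ C, ∀ y ∈ C, x ≠ y → (inner ℝ x y : ℝ) ≤ Real.cos θ)} := by
    refine ⟨C, hcard, ?_, ?_⟩
    · intro p hp
      obtain ⟨i, _, rfl⟩ := Finset.mem_image.1 hp
      exact hfnorm i
    · intro p hp q hq hpq
      obtain ⟨i, _, rfl⟩ := Finset.mem_image.1 hp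
      obtain ⟨j, _, rfl⟩ := Finset.mem_image.1 hq
      have hij : i ≠ j := fun h => hpq (by rw [h])
      rw [hfinner]
      exact hang i j hij
  exact le_csSup (code_bddAbove _ θ hcos) hmem

/-! ### The tangent space at a point of the hyperboloid -/

noncomputable def Blin (n : ℕ) (c : EuclideanSpace ℝ (Fin (n + 1))) :
    EuclideanSpace ℝ (Fin (n + 1)) →ₗ[ℝ] ℝ where
  toFun v := Bform n v c
  map_add' x y := Bform_add_left n x y c
  map_smul' r x := by simpa using Bform_smul_left n r x c

lemma finrank_kerBlin (n : ℕ) (c : EuclideanSpace ℝ (Fin (n + 1))) (hc : InHyperboloid n c) :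
    Module.finrank ℝ (LinearMap.ker (Blin n c)) = n := by
  have hsurj : Function.Surjective (Blin n c) := by
    intro t
    refine ⟨(-t) • c, ?_⟩
    show Bform n ((-t) • c) c = t
    rw [Bform_smul_left, Bform_self n c hc]; ring
  have h1 := LinearMap.finrank_range_add_finrank_ker (Blin n c)
  rw [LinearMap.range_eq_top.2 hsurj, finrank_top, Module.finrank_self,
    finrank_euclideanSpace_fin] at h1
  omega

noncomputable def hypCore (n : ℕ) (c : EuclideanSpace ℝ (Fin (n + 1))) (hc : InHyperboloid n c) :
    InnerProductSpace.Core ℝ ↥(LinearMap.ker (Blin n c)) where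
  inner v w := Bform n v w
  conj_inner_symm v w := by
    simpa using Bform_comm n (w : EuclideanSpace ℝ (Fin (n + 1))) v
  re_inner_nonneg v := by
    have hmem : Bform n (v : EuclideanSpace ℝ (Fin (n + 1))) c = 0 := v.2
    simpa using (Bform_posdef n c hc v hmem).1
  add_left v w z := by
    have : ((v + w : LinearMap.ker (Blin n c)) : EuclideanSpace ℝ (Fin (n + 1)))
        = (v : EuclideanSpace ℝ (Fin (n + 1))) + w := rfl
    show Bform n ((v + w : LinearMap.ker (Blin n c)) : EuclideanSpace ℝ (Fin (n + 1))) z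
      = Bform n v z + Bform n w z
    rw [this, Bform_add_left]
  smul_left v w r := by
    have : ((r • v : LinearMap.ker (Blin n c)) : EuclideanSpace ℝ (Fin (n + 1)))
        = r • (v : EuclideanSpace ℝ (Fin (n + 1))) := rfl
    show Bform n ((r • v : LinearMap.ker (Blin n c)) : EuclideanSpace ℝ (Fin (n + 1))) w
      = (starRingEnd ℝ) r * Bform n v w
    rw [this, Bform_smul_left]
    simp
  definite v h := by
    have hmem : Bform n (v : EuclideanSpace ℝ (Fin (n + 1))) c = 0 := v.2
    have := (Bform_posdef n c hc v hmem).2 h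
    exact Subtype.ext this

lemma cos_eq_one_sub_two_sin_sq_half (θ : ℝ) :
    Real.cos θ = 1 - 2 * Real.sin (θ / 2) ^ 2 := by
  have h := Real.cos_two_mul' (θ / 2)
  rw [show 2 * (θ / 2) = θ by ring] at h
  have h2 := Real.sin_sq_add_cos_sq (θ / 2)
  linarith

theorem hyperbolic_ball_code_bound
    (n : ℕ) (hn : 2 ≤ n) (r R θ : ℝ)
    (hr : 0 < r) (hrR : r ≤ R) (hR2r : R ≤ 2 * r)
    (hθ0 : 0 < θ) (hθπ : θ ≤ π)
    (hθ : Real.sin (θ / 2) = Real.sinh r / Real.sinh R)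
    (N : ℕ) (c : EuclideanSpace ℝ (Fin (n + 1)))
    (x : Fin N → EuclideanSpace ℝ (Fin (n + 1)))
    (hc : InHyperboloid n c) (hx : ∀ i, InHyperboloid n (x i))
    (hxc : ∀ i, x i ≠ c)
    (hxR : ∀ i, hypDist n (x i) c ≤ R)
    (hsep : ∀ i j, i ≠ j → 2 * r ≤ hypDist n (x i) (x j)) :
    N ≤ sphericalCodeMax n θ := by
  classical
  have hR0 : 0 < R := lt_of_lt_of_le hr hrR
  have hS : 0 < Real.sinh R := (Real.sinh_pos_iff).2 hR0
  have hs : 0 < Real.sinh r := (Real.sinh_pos_iff).2 hr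
  -- cos θ = (cosh R ^ 2 - cosh (2r)) / (cosh R ^ 2 - 1)
  have hcoshsq : Real.cosh R ^ 2 = 1 + Real.sinh R ^ 2 := Real.cosh_sq' R
  have hcosh2r : Real.cosh (2 * r) = 1 + 2 * Real.sinh r ^ 2 := by
    rw [Real.cosh_two_mul, Real.cosh_sq']; ring
  have hcosθ : Real.cos θ = (Real.cosh R ^ 2 - Real.cosh (2 * r)) / (Real.cosh R ^ 2 - 1) := by
    have h1 := cos_eq_one_sub_two_sin_sq_half θ
    rw [h1, hθ, hcoshsq, hcosh2r, div_pow]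
    field_simp
    try ring
  have hcosθlt : Real.cos θ < 1 := by
    have h1 := cos_eq_one_sub_two_sin_sq_half θ
    have h2 : 0 < Real.sin (θ / 2) := by rw [hθ]; positivity
    nlinarith
  -- quantities
  set A := Real.cosh R with hA
  set C0 := Real.cosh (2 * r) with hC0
  have hA1 : 1 < A := by
    rw [hA]; exact (Real.one_lt_cosh).2 (ne_of_gt hR0)
  have hAC0 : A ≤ C0 := by
    rw [hA, hC0, Real.cosh_le_cosh]
    rw [abs_of_pos hR0, abs_of_pos (by linarith : (0:ℝ) < 2 * r)]
    exact hR2r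
  set a : Fin N → ℝ := fun i => -Bform n (x i) c with ha
  have ha1 : ∀ i, 1 < a i := fun i =>
    (negB_ge_one n (x i) c (hx i) hc).2 (hxc i)
  have haA : ∀ i, a i ≤ A := by
    intro i
    have h1 := hxR i
    rw [hypDist_eq] at h1
    have h2 : Real.cosh (_root_.arcosh (a i)) ≤ Real.cosh R := by
      rw [Real.cosh_le_cosh, abs_of_nonneg (_root_.arcosh_nonneg (ha1 i).le), abs_of_pos hR0]
      exact h1
    rwa [_root_.cosh_arcosh (ha1 i).le] at h2
  set t : Fin N → Fin N → ℝ := fun i j => -Bform n (x i) (x j) with ht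
  have htC0 : ∀ i j, i ≠ j → C0 ≤ t i j := by
    intro i j hij
    have h1 := hsep i j hij
    rw [hypDist_eq] at h1
    have ht1 : 1 ≤ t i j := (negB_ge_one n (x i) (x j) (hx i) (hx j)).1
    have h2 : Real.cosh (2 * r) ≤ Real.cosh (_root_.arcosh (t i j)) := by
      rw [Real.cosh_le_cosh, abs_of_pos (by linarith : (0:ℝ) < 2 * r),
        abs_of_nonneg (_root_.arcosh_nonneg ht1)]
      exact h1
    rwa [_root_.cosh_arcosh ht1] at h2
  -- tangent vectors
  set K := LinearMap.ker (Blin n c) with hK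
  set v : Fin N → EuclideanSpace ℝ (Fin (n + 1)) :=
    fun i => x i + (Bform n (x i) c) • c with hv
  have hvmem : ∀ i, v i ∈ K := by
    intro i
    rw [hK, LinearMap.mem_ker]
    show Bform n (v i) c = 0
    rw [hv]
    simp only []
    rw [Bform_add_left, Bform_smul_left, Bform_self n c hc]
    ring
  have hBvv : ∀ i j, Bform n (v i) (v j) = a i * a j - t i j := by
    intro i j
    rw [hv]
    simp only []
    rw [Bform_add_left, Bform_smul_left, Bform_add_right, Bform_add_right, Bform_smul_right,
      Bform_smul_right, Bform_self n c hc, Bform_comm n c (x j), ha, ht]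
    simp only []
    ring
  have hBvii : ∀ i, Bform n (v i) (v i) = a i ^ 2 - 1 := by
    intro i
    have h1 : Bform n (x i) (x i) = -1 := Bform_self n (x i) (hx i)
    rw [hv]
    simp only []
    rw [Bform_add_left, Bform_smul_left, Bform_add_right, Bform_add_right, Bform_smul_right,
      Bform_smul_right, Bform_self n c hc, Bform_comm n c (x i), h1, ha]
    ring
  -- normalized vectors in the kernel
  set cO := hypCore n c hc with hcO
  set u : Fin N → ↥K := fun i =>
    (Real.sqrt (a i ^ 2 - 1))⁻¹ • ⟨v i, hvmem i⟩ with hu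
  have ha2pos : ∀ i, (0:ℝ) < a i ^ 2 - 1 := by
    intro i; nlinarith [ha1 i]
  have hsqrtpos : ∀ i, (0:ℝ) < Real.sqrt (a i ^ 2 - 1) :=
    fun i => Real.sqrt_pos.2 (ha2pos i)
  have huinner : ∀ i j, cO.inner (u i) (u j)
      = (Real.sqrt (a i ^ 2 - 1))⁻¹ * ((Real.sqrt (a j ^ 2 - 1))⁻¹ * Bform n (v i) (v j)) := by
    intro i j
    rw [hu]
    simp only []
    show Bform n (((Real.sqrt (a i ^ 2 - 1))⁻¹ • (⟨v i, hvmem i⟩ : ↥K) : ↥K) : EuclideanSpace ℝ (Fin (n + 1)))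
      (((Real.sqrt (a j ^ 2 - 1))⁻¹ • (⟨v j, hvmem j⟩ : ↥K) : ↥K) : EuclideanSpace ℝ (Fin (n + 1))) = _
    rw [show (((Real.sqrt (a i ^ 2 - 1))⁻¹ • (⟨v i, hvmem i⟩ : ↥K) : ↥K) : EuclideanSpace ℝ (Fin (n + 1)))
        = (Real.sqrt (a i ^ 2 - 1))⁻¹ • v i from rfl,
      show (((Real.sqrt (a j ^ 2 - 1))⁻¹ • (⟨v j, hvmem j⟩ : ↥K) : ↥K) : EuclideanSpace ℝ (Fin (n + 1)))
        = (Real.sqrt (a j ^ 2 - 1))⁻¹ • v j from rfl,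
      Bform_smul_left, Bform_smul_right]
  have hunorm : ∀ i, cO.inner (u i) (u i) = 1 := by
    intro i
    have hss : Real.sqrt (a i ^ 2 - 1) * Real.sqrt (a i ^ 2 - 1) = a i ^ 2 - 1 :=
      Real.mul_self_sqrt (ha2pos i).le
    rw [huinner, hBvii]
    have h1 : Real.sqrt (a i ^ 2 - 1) ≠ 0 := ne_of_gt (hsqrtpos i)
    field_simp
    rw [Real.sq_sqrt (ha2pos i).le]
  have hang : ∀ i j, i ≠ j → cO.inner (u i) (u j) ≤ Real.cos θ := by
    intro i j hij
    have hM := main_ineq A C0 (a i) (a j) (t i j) (ha1 i) (haA i) (ha1 j) (haA j) hAC0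
      (htC0 i j hij)
    rw [huinner, hBvv, hcosθ]
    have hsi := hsqrtpos i
    have hsj := hsqrtpos j
    rw [show (Real.sqrt (a i ^ 2 - 1))⁻¹ * ((Real.sqrt (a j ^ 2 - 1))⁻¹ * (a i * a j - t i j))
        = (a i * a j - t i j) / (Real.sqrt (a i ^ 2 - 1) * Real.sqrt (a j ^ 2 - 1)) by
      field_simp; try ring]
    rw [div_le_iff₀ (by positivity)]
    exact hM
  exact code_bound_core cO n (finrank_kerBlin n c hc) θ hcosθlt N u hunorm hang
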